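/- Let S = U·Diag(σ)·Vᵀ be a compact SVD of a real matrix S of rank k ≥ 2 with singular values σ_1 ≥ ... ≥ σ_{k−1} > σ_k > 0 (so σ_k is strictly the unique minimum). Let R' = (1/2)·σ_k² − (1/(2k))·Σ σ_i² and G = (σ_k·u_k·v_kᵀ − (1/k)·S)/R'², and set S' = S − η·G for step size 0 < η < (k/(k−1))·R'². Then the singular values of S' are σ'_i = (1 + η/(k·R'²))·σ_i for i < k and σ'_k = (1 + η/(k·R'²) − η/R'²)·σ_k, all positive, with σ'_1 maximal and σ'_k minimal. -/

import Mathlib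

open Matrix Finset

lemma vecmulvec_eq (k pr pc : ℕ) (m : Fin k) (U : Matrix (Fin pr) (Fin k) ℝ)
    (V : Matrix (Fin pc) (Fin k) ℝ) :
    Matrix.vecMulVec (fun i => U i m) (fun j => V j m)
      = U * Matrix.diagonal (fun l => if l = m then (1:ℝ) else 0) * Vᵀ := by
  ext i j
  simp [mul_apply, diagonal, vecMulVec_apply, Finset.sum_ite_eq, mul_ite, ite_mul]

lemma matrix_step (pr pc k : ℕ)
    (U : Matrix (Fin pr) (Fin k) ℝ) (V : Matrix (Fin pc) (Fin k) ℝ)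
    (σ : Fin k → ℝ) (m : Fin k) (η R' : ℝ) (hR : R' ≠ 0) (hk : (k:ℝ) ≠ 0) :
    (U * diagonal σ * Vᵀ) - η • ((R' ^ 2)⁻¹ •
      (σ m • Matrix.vecMulVec (fun i => U i m) (fun j => V j m)
        - ((k : ℝ))⁻¹ • (U * diagonal σ * Vᵀ)))
    = U * Matrix.diagonal (fun l =>
        if l = m then (1 + η / ((k : ℝ) * R' ^ 2) - η / R' ^ 2) * σ l
        else (1 + η / ((k : ℝ) * R' ^ 2)) * σ l) * Vᵀ := by
  rw [vecmulvec_eq]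
  have h : Matrix.diagonal (fun l =>
        if l = m then (1 + η / ((k : ℝ) * R' ^ 2) - η / R' ^ 2) * σ l
        else (1 + η / ((k : ℝ) * R' ^ 2)) * σ l)
      = diagonal σ - (η * (R'^2)⁻¹) • (σ m • diagonal (fun l => if l = m then (1:ℝ) else 0)
          - (k:ℝ)⁻¹ • diagonal σ) := by
    ext i j
    by_cases hij : i = j
    · subst hij
      by_cases him : i = m <;> simp [diagonal, him] <;> field_simp <;> ring
    · simp [diagonal, hij]
  rw [h]
  simp only [Matrix.mul_sub, Matrix.sub_mul, Matrix.mul_smul, Matrix.smul_mul, smul_smul, smul_sub]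
  module

/-- Let `S = U·Diag(σ)·Vᵀ` be a compact SVD of a rank-`k` (`k ≥ 2`) real
matrix with `σ_1 ≥ ⋯ ≥ σ_{k−1} > σ_k > 0` (the minimum singular value unique).
With `R' = (1/2)σ_k² − (1/(2k))Σσ_i²`, `G = (σ_k·u_k v_kᵀ − (1/k)·S)/R'²` and
`S' = S − η·G` for `0 < η < (k/(k−1))·R'²`, the matrix `S'` has singular values
`σ'_i = (1 + η/(kR'²))·σ_i` for `i < k` and `σ'_k = (1 + η/(kR'²) − η/R'²)·σ_k`,
all positive, with `σ'_1` maximal and `σ'_k` minimal. -/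
theorem stmt_7 (pr pc k : ℕ) (hk : 2 ≤ k)
    (S : Matrix (Fin pr) (Fin pc) ℝ)
    (U : Matrix (Fin pr) (Fin k) ℝ) (V : Matrix (Fin pc) (Fin k) ℝ)
    (σ : Fin k → ℝ)
    (hU : Uᵀ * U = 1) (hV : Vᵀ * V = 1)
    (hrank : S.rank = k)
    (hSVD : S = U * Matrix.diagonal σ * Vᵀ)
    (hpos : ∀ i, 0 < σ i) (hmono : Antitone σ)
    (hmin : ∀ i : Fin k, i ≠ ⟨k - 1, by omega⟩ → σ ⟨k - 1, by omega⟩ < σ i)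
    (R' : ℝ)
    (hR' : R' = (1 / 2) * (σ ⟨k - 1, by omega⟩) ^ 2 - (1 / (2 * (k : ℝ))) * ∑ i, (σ i) ^ 2)
    (G : Matrix (Fin pr) (Fin pc) ℝ)
    (hG : G = (R' ^ 2)⁻¹ •
      (σ ⟨k - 1, by omega⟩ •
          Matrix.vecMulVec (fun i => U i ⟨k - 1, by omega⟩) (fun j => V j ⟨k - 1, by omega⟩)
        - ((k : ℝ))⁻¹ • S))
    (η : ℝ) (hη0 : 0 < η) (hη1 : η < ((k : ℝ) / ((k : ℝ) - 1)) * R' ^ 2) :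
    ∃ σ' : Fin k → ℝ,
      (∀ i : Fin k, σ' i =
          if i = ⟨k - 1, by omega⟩ then
            (1 + η / ((k : ℝ) * R' ^ 2) - η / R' ^ 2) * σ i
          else (1 + η / ((k : ℝ) * R' ^ 2)) * σ i) ∧
      S - η • G = U * Matrix.diagonal σ' * Vᵀ ∧
      (∀ i, 0 < σ' i) ∧
      (∀ i, σ' i ≤ σ' ⟨0, by omega⟩) ∧
      (∀ i, σ' ⟨k - 1, by omega⟩ ≤ σ' i) := by
  have hm : (⟨k - 1, by omega⟩ : Fin k) = ⟨k - 1, by omega⟩ := rfl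
  set m : Fin k := ⟨k - 1, by omega⟩ with hmdef
  have hk1 : (1:ℝ) ≤ (k:ℝ) - 1 := by
    have : (2:ℝ) ≤ (k:ℝ) := by exact_mod_cast hk
    linarith
  have hkpos : (0:ℝ) < (k:ℝ) := by linarith
  have hsum : (k:ℝ) * σ m ^ 2 < ∑ i, σ i ^ 2 := by
    have h1 : ∑ _i : Fin k, σ m ^ 2 < ∑ i, σ i ^ 2 := by
      apply Finset.sum_lt_sum
      · intro i _
        have hile : i ≤ m := by
          have := i.isLt
          rw [hmdef, Fin.le_def]; simp; omega
        exact pow_le_pow_left₀ (le_of_lt (hpos m)) (hmono hile) 2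
      · refine ⟨⟨0, by omega⟩, Finset.mem_univ _, ?_⟩
        have h0 : (⟨0, by omega⟩ : Fin k) ≠ m := by
          simp [hmdef, Fin.ext_iff]; omega
        have := hmin ⟨0, by omega⟩ h0
        exact pow_lt_pow_left₀ this (le_of_lt (hpos m)) (by norm_num)
    simpa [Finset.sum_const, Fintype.card_fin, nsmul_eq_mul] using h1
  have hR'neg : R' < 0 := by
    have h2 : 1/(2*(k:ℝ)) * ((k:ℝ)*σ m^2) < 1/(2*(k:ℝ)) * ∑ i, σ i ^ 2 :=
      mul_lt_mul_of_pos_left hsum (by positivity)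
    have h3 : 1/(2*(k:ℝ)) * ((k:ℝ)*σ m^2) = 1/2 * σ m^2 := by
      field_simp
    rw [hR']; linarith
  have hR2 : (0:ℝ) < R' ^ 2 := by nlinarith
  have hc1 : 0 < 1 + η / ((k:ℝ) * R' ^ 2) := by
    have : 0 < η / ((k:ℝ) * R' ^ 2) := div_pos hη0 (mul_pos hkpos hR2)
    linarith
  have hc2 : 0 < 1 + η / ((k:ℝ) * R' ^ 2) - η / R' ^ 2 := by
    have hkm1 : (0:ℝ) < (k:ℝ) - 1 := by linarith
    have key : η * ((k:ℝ)-1) < (k:ℝ) * R'^2 := by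
      rw [div_mul_eq_mul_div, lt_div_iff₀ hkm1] at hη1; linarith
    have hc2eq : 1 + η / ((k:ℝ) * R' ^ 2) - η / R' ^ 2
        = ((k:ℝ)*R'^2 - η*((k:ℝ)-1))/((k:ℝ)*R'^2) := by
      field_simp [ne_of_lt hR'neg]; ring
    rw [hc2eq]
    exact div_pos (by linarith) (mul_pos hkpos hR2)
  have hc21 : 1 + η / ((k:ℝ) * R' ^ 2) - η / R' ^ 2 ≤ 1 + η / ((k:ℝ) * R' ^ 2) := by
    have : 0 ≤ η / R' ^ 2 := by positivity
    linarith
  refine ⟨fun i => if i = m then (1 + η / ((k:ℝ) * R' ^ 2) - η / R' ^ 2) * σ i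
      else (1 + η / ((k:ℝ) * R' ^ 2)) * σ i, fun i => rfl, ?_, ?_, ?_, ?_⟩
  · rw [hG, hSVD]
    exact matrix_step pr pc k U V σ m η R' (ne_of_lt hR'neg) (ne_of_gt hkpos)
  · intro i
    simp only []
    split
    · exact mul_pos hc2 (hpos i)
    · exact mul_pos hc1 (hpos i)
  · intro i
    have h0m : (⟨0, by omega⟩ : Fin k) ≠ m := by simp [hmdef, Fin.ext_iff]; omega
    have hσ0 : σ i ≤ σ ⟨0, by omega⟩ := hmono (by rw [Fin.le_def]; simp)
    simp only []
    rw [if_neg h0m]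
    split
    · calc (1 + η / ((k:ℝ) * R' ^ 2) - η / R' ^ 2) * σ i
          ≤ (1 + η / ((k:ℝ) * R' ^ 2)) * σ i :=
            mul_le_mul_of_nonneg_right hc21 (hpos i).le
        _ ≤ (1 + η / ((k:ℝ) * R' ^ 2)) * σ ⟨0, by omega⟩ :=
            mul_le_mul_of_nonneg_left hσ0 hc1.le
    · exact mul_le_mul_of_nonneg_left hσ0 hc1.le
  · intro i
    simp only []
    by_cases him : i = m
    · subst him; simp
    · rw [if_pos trivial, if_neg him]
      have hσm : σ m ≤ σ i := le_of_lt (hmin i him)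
      calc (1 + η / ((k:ℝ) * R' ^ 2) - η / R' ^ 2) * σ m
          ≤ (1 + η / ((k:ℝ) * R' ^ 2)) * σ m :=
            mul_le_mul_of_nonneg_right hc21 (hpos m).le
        _ ≤ (1 + η / ((k:ℝ) * R' ^ 2)) * σ i :=
            mul_le_mul_of_nonneg_left hσm hc1.le
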